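/- For all integers h ≥ 0 and n ≥ 0, Φ(CBT(h), n) = ∑_{i=1}^{n} C(h, i), where C(h, i) denotes the binomial coefficient (equal to 0 when i > h). -/

import Mathlib

/-- A binary computation tree: a single node, or a root with two subtrees. -/
inductive BTree : Type
  | triv : BTree
  | node : BTree → BTree → BTree
  deriving DecidableEq

/-- A steal step on a multiset of binary computation trees: choose an arbitrary
tree `U` and a tree `node l r` from the multiset, and replace them by `l` and `r`. -/
def StealStep (S S' : Multiset BTree) : Prop :=
  ∃ (U l r : BTree) (S₀ : Multiset BTree),
    S = U ::ₘ BTree.node l r ::ₘ S₀ ∧ S' = l ::ₘ r ::ₘ S₀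

/-- `StealSeq n S` means there exists a sequence of `n` steal steps starting from `S`. -/
def StealSeq : ℕ → Multiset BTree → Prop
  | 0, _ => True
  | n + 1, S => ∃ S', StealStep S S' ∧ StealSeq n S'

/-- The maximum length of a sequence of steal steps starting from `S`. -/
noncomputable def steals (S : Multiset BTree) : ℕ :=
  sSup {n | StealSeq n S}

/-- The `n`-th potential of `T`: the maximum number of steals starting from a
configuration with one processor owning `T` and `n` processors with trivial trees. -/
noncomputable def Phi (T : BTree) (n : ℕ) : ℕ :=
  steals (T ::ₘ Multiset.replicate n BTree.triv)


/-- The complete binary tree of height `h`. -/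
def CBT : ℕ → BTree
  | 0 => BTree.triv
  | h + 1 => BTree.node (CBT h) (CBT h)

/-- numeric potential -/
def phi (h n : ℕ) : ℕ := ∑ i ∈ Finset.Icc 1 n, Nat.choose h i

lemma phi_zero_left (n : ℕ) : phi 0 n = 0 := by
  apply Finset.sum_eq_zero
  intro i hi
  simp only [Finset.mem_Icc] at hi
  exact Nat.choose_eq_zero_of_lt hi.1

lemma phi_zero_right (h : ℕ) : phi h 0 = 0 := by simp [phi]

lemma phi_succ_right (h n : ℕ) : phi h (n + 1) = phi h n + Nat.choose h (n + 1) := by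
  unfold phi
  rw [Finset.sum_Icc_succ_top (by omega)]

lemma phi_mono_right (h : ℕ) {n n' : ℕ} (hn : n ≤ n') : phi h n ≤ phi h n' := by
  apply Finset.sum_le_sum_of_subset
  apply Finset.Icc_subset_Icc_right hn

lemma phi_mono_left {h h' : ℕ} (hh : h ≤ h') (n : ℕ) : phi h n ≤ phi h' n :=
  Finset.sum_le_sum fun i _ => Nat.choose_le_choose i hh

lemma phi_succ_succ (h n : ℕ) : phi (h + 1) (n + 1) = phi h (n + 1) + phi h n + 1 := by
  induction n with
  | zero => simp [phi]
  | succ n ih =>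
    have hp : (h+1).choose (n+1+1) = h.choose (n+1) + h.choose (n+1+1) :=
      Nat.choose_succ_succ h (n+1)
    rw [phi_succ_right, ih, phi_succ_right h (n+1), phi_succ_right h n, hp]
    omega

/-- value of an arrangement, starting at index `i` -/
def val : ℕ → List ℕ → ℕ
  | _, [] => 0
  | i, x :: xs => phi x i + val (i + 1) xs

lemma val_append (P Q : List ℕ) (i : ℕ) :
    val i (P ++ Q) = val i P + val (i + P.length) Q := by
  induction P generalizing i with
  | nil => simp [val]
  | cons x xs ih =>
    show val i (x :: (xs ++ Q)) = _
    simp only [val, ih (i+1), List.length_cons]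
    have : i + 1 + xs.length = i + (xs.length + 1) := by omega
    rw [this]
    omega

lemma val_zeros (L : List ℕ) (hL : ∀ y ∈ L, y = 0) (i : ℕ) : val i L = 0 := by
  induction L generalizing i with
  | nil => rfl
  | cons x xs ih =>
    have hx : x = 0 := hL x (by simp)
    simp [val, hx, phi_zero_left, ih (fun y hy => hL y (by simp [hy])) (i+1)]

lemma val_le (L : List ℕ) (i : ℕ) :
    val i L ≤ (L.map (fun x => phi x (i + L.length))).sum := by
  induction L generalizing i with
  | nil => simp [val]
  | cons x xs ih =>
    simp only [val, List.map_cons, List.sum_cons, List.length_cons]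
    have h1 : phi x i ≤ phi x (i + (xs.length + 1)) := phi_mono_right x (by omega)
    have h2 := ih (i + 1)
    have : i + 1 + xs.length = i + (xs.length + 1) := by omega
    rw [this] at h2
    omega

lemma two_mem_split (L' : List ℕ) (b : ℕ) (M : Multiset ℕ)
    (h : (↑L' : Multiset ℕ) = b ::ₘ b ::ₘ M) :
    ∃ A B C : List ℕ, L' = A ++ b :: (B ++ b :: C) ∧ (↑A + ↑B + ↑C : Multiset ℕ) = M := by
  have hb1 : b ∈ L' := by
    rw [← Multiset.mem_coe, h]; exact Multiset.mem_cons_self _ _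
  obtain ⟨P, Q, rfl⟩ := List.append_of_mem hb1
  rw [← Multiset.coe_add, ← Multiset.cons_coe] at h
  have hcount := fun c => congrArg (Multiset.count c) h
  simp only [Multiset.count_add, Multiset.count_cons] at hcount
  have hb2 : b ∈ P ∨ b ∈ Q := by
    by_contra hc
    push_neg at hc
    have h1 : Multiset.count b (↑P : Multiset ℕ) = 0 := by
      simp [Multiset.count_eq_zero, hc.1]
    have h2 : Multiset.count b (↑Q : Multiset ℕ) = 0 := by
      simp [Multiset.count_eq_zero, hc.2]
    have := hcount b
    simp [h1, h2] at this
  rcases hb2 with hb2 | hb2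
  · obtain ⟨P1, P2, rfl⟩ := List.append_of_mem hb2
    refine ⟨P1, P2, Q, by simp, ?_⟩
    ext c
    have := hcount c
    simp only [← Multiset.coe_add, ← Multiset.cons_coe, Multiset.count_add,
      Multiset.count_cons] at this ⊢
    split_ifs at this ⊢ <;> omega
  · obtain ⟨Q1, Q2, rfl⟩ := List.append_of_mem hb2
    refine ⟨P, Q1, Q2, by simp, ?_⟩
    ext c
    have := hcount c
    simp only [← Multiset.coe_add, ← Multiset.cons_coe, Multiset.count_add,
      Multiset.count_cons] at this ⊢
    split_ifs at this ⊢ <;> omega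

lemma exists_arr (L' : List ℕ) (a b : ℕ) (M : Multiset ℕ)
    (h : (↑L' : Multiset ℕ) = b ::ₘ b ::ₘ M) :
    ∃ L : List ℕ, (↑L : Multiset ℕ) = a ::ₘ (b + 1) ::ₘ M ∧ val 0 L' + 1 ≤ val 0 L := by
  obtain ⟨A, B, C, rfl, hM⟩ := two_mem_split L' b M h
  refine ⟨A ++ a :: (B ++ (b + 1) :: C), ?_, ?_⟩
  · ext c
    have := congrArg (Multiset.count c) hM
    simp only [← Multiset.coe_add, ← Multiset.cons_coe, Multiset.count_add,
      Multiset.count_cons] at this ⊢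
    split_ifs at this ⊢ <;> omega
  · have e1 : ∀ x y : ℕ, val 0 (A ++ x :: (B ++ y :: C)) =
      val 0 A + phi x A.length + val (A.length + 1) B
        + phi y (A.length + 1 + B.length) + val (A.length + 1 + B.length + 1) C := by
      intro x y
      rw [val_append]
      show val 0 A + val (0 + A.length) (x :: (B ++ y :: C)) = _
      rw [val, val_append, val]
      simp only [Nat.zero_add]
      have : A.length + 1 + B.length + 1 = A.length + 1 + (B.length + 1) := by omega
      omega
    rw [e1 b b, e1 a (b+1)]
    have key : phi b A.length + phi b (A.length + 1 + B.length) + 1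
        ≤ phi a A.length + phi (b+1) (A.length + 1 + B.length) := by
      have hp := phi_succ_succ b (A.length + B.length)
      have h3 : phi b A.length ≤ phi b (A.length + B.length) := phi_mono_right _ (by omega)
      have h4 : A.length + B.length + 1 = A.length + 1 + B.length := by omega
      rw [h4] at hp
      omega
    omega

def valSet (H : Multiset ℕ) : Set ℕ := {v | ∃ L : List ℕ, (↑L : Multiset ℕ) = H ∧ val 0 L = v}

noncomputable def pot (H : Multiset ℕ) : ℕ := sSup (valSet H)

lemma valSet_nonempty (H : Multiset ℕ) : (valSet H).Nonempty :=
  ⟨val 0 H.toList, H.toList, H.coe_toList, rfl⟩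

lemma valSet_bdd (H : Multiset ℕ) : BddAbove (valSet H) := by
  refine ⟨(H.map fun x => phi x H.card).sum, ?_⟩
  rintro v ⟨L, hL, rfl⟩
  have hlen : L.length = Multiset.card H := by rw [← hL]; simp
  have := val_le L 0
  simp only [Nat.zero_add, hlen] at this
  calc val 0 L ≤ (L.map fun x => phi x (Multiset.card H)).sum := this
    _ = (H.map fun x => phi x (Multiset.card H)).sum := by
        rw [← hL]; simp

lemma le_pot {L : List ℕ} {H : Multiset ℕ} (hL : (↑L : Multiset ℕ) = H) :
    val 0 L ≤ pot H :=
  le_csSup (valSet_bdd H) ⟨L, hL, rfl⟩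

lemma pot_mem (H : Multiset ℕ) : pot H ∈ valSet H :=
  Nat.sSup_mem (valSet_nonempty H) (valSet_bdd H)

lemma pot_step (a b : ℕ) (M : Multiset ℕ) :
    pot (b ::ₘ b ::ₘ M) + 1 ≤ pot (a ::ₘ (b + 1) ::ₘ M) := by
  obtain ⟨L', hL', hv⟩ := pot_mem (b ::ₘ b ::ₘ M)
  obtain ⟨L, hL, hval⟩ := exists_arr L' a b M hL'
  calc pot (b ::ₘ b ::ₘ M) + 1 = val 0 L' + 1 := by rw [hv]
    _ ≤ val 0 L := hval
    _ ≤ _ := le_pot hL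

lemma val_start (L : List ℕ) (h : ℕ) : ∀ n i : ℕ,
    (↑L : Multiset ℕ) = h ::ₘ Multiset.replicate n 0 → val i L ≤ phi h (n + i) := by
  induction L with
  | nil =>
    intro n i hL
    have := congrArg Multiset.card hL
    simp at this
  | cons x xs ih =>
    intro n i hL
    by_cases hh : h = 0
    · subst hh
      have hz : ∀ y ∈ x :: xs, y = 0 := by
        intro y hy
        have : y ∈ (0 : ℕ) ::ₘ Multiset.replicate n 0 := by
          rw [← hL]; exact Multiset.mem_coe.2 hy
        rcases Multiset.mem_cons.1 this with h1 | h1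
        · exact h1
        · exact (Multiset.eq_of_mem_replicate h1)
      rw [val_zeros _ hz]
      exact Nat.zero_le _
    · have hx : x = h ∨ x = 0 := by
        have : x ∈ h ::ₘ Multiset.replicate n 0 := by
          rw [← hL]; exact Multiset.mem_coe.2 (by simp)
        rcases Multiset.mem_cons.1 this with h1 | h1
        · exact Or.inl h1
        · exact Or.inr (Multiset.eq_of_mem_replicate h1)
      rw [← Multiset.cons_coe] at hL
      rcases hx with rfl | rfl
      · have hxs : (↑xs : Multiset ℕ) = Multiset.replicate n 0 :=
          (Multiset.cons_inj_right x).1 hL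
        have hz : ∀ y ∈ xs, y = 0 := by
          intro y hy
          exact Multiset.eq_of_mem_replicate (by rw [← hxs]; exact Multiset.mem_coe.2 hy)
        show phi x i + val (i + 1) xs ≤ _
        rw [val_zeros _ hz]
        simpa using phi_mono_right x (show i ≤ n + i by omega)
      · cases n with
        | zero =>
          exfalso
          have := congrArg (Multiset.count 0) hL
          simp [Multiset.count_cons, hh, Ne.symm hh] at this
        | succ m =>
          have hxs : (↑xs : Multiset ℕ) = h ::ₘ Multiset.replicate m 0 := by
            rw [Multiset.replicate_succ, Multiset.cons_swap] at hL
            exact (Multiset.cons_inj_right 0).1 hL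
          have := ih m (i + 1) hxs
          show phi 0 i + val (i + 1) xs ≤ _
          rw [phi_zero_left]
          have heq : m + (i + 1) = m + 1 + i := by omega
          rw [heq] at this
          omega

lemma pot_start (h n : ℕ) : pot (h ::ₘ Multiset.replicate n 0) ≤ phi h n := by
  apply csSup_le (valSet_nonempty _)
  rintro v ⟨L, hL, rfl⟩
  simpa using val_start L h n 0 hL

lemma CBT_inj : Function.Injective CBT := by
  intro x
  induction x with
  | zero =>
    intro y hy
    cases y with
    | zero => rfl
    | succ m => simp [CBT] at hy
  | succ n ih =>
    intro y hy
    cases y with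
    | zero => simp [CBT] at hy
    | succ m =>
      simp only [CBT, BTree.node.injEq] at hy
      rw [ih hy.1]

/-- bridge: a steal step on a multiset of CBTs is a numeric step -/
lemma bridge (H : Multiset ℕ) (S' : Multiset BTree) (hs : StealStep (H.map CBT) S') :
    ∃ (a b : ℕ) (M : Multiset ℕ),
      H = a ::ₘ (b + 1) ::ₘ M ∧ S' = (b ::ₘ b ::ₘ M).map CBT := by
  obtain ⟨U, l, r, S₀, hS, hS'⟩ := hs
  have hmem : BTree.node l r ∈ H.map CBT := by
    rw [hS]; exact Multiset.mem_cons.2 (Or.inr (Multiset.mem_cons_self _ _))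
  obtain ⟨k, hk, hCBT⟩ := Multiset.mem_map.1 hmem
  cases k with
  | zero => simp [CBT] at hCBT
  | succ b =>
    simp only [CBT, BTree.node.injEq] at hCBT
    obtain ⟨hl, hr⟩ := hCBT
    have h1 : (H.erase (b + 1)).map CBT = U ::ₘ S₀ := by
      rw [Multiset.map_erase CBT CBT_inj]
      rw [hS, show CBT (b+1) = BTree.node l r from by show BTree.node (CBT b) (CBT b) = _; exact congrArg₂ BTree.node hl hr]
      rw [Multiset.cons_swap, Multiset.erase_cons_head]
    have hU : U ∈ (H.erase (b + 1)).map CBT := by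
      rw [h1]; exact Multiset.mem_cons_self _ _
    obtain ⟨a, ha, haU⟩ := Multiset.mem_map.1 hU
    refine ⟨a, b, (H.erase (b + 1)).erase a, ?_, ?_⟩
    · rw [Multiset.cons_swap, Multiset.cons_erase ha, Multiset.cons_erase hk]
    · have h2 : ((H.erase (b + 1)).erase a).map CBT = S₀ := by
        rw [Multiset.map_erase CBT CBT_inj, h1, haU, Multiset.erase_cons_head]
      rw [hS', Multiset.map_cons, Multiset.map_cons, h2, ← hl, ← hr]

/-- size bound -/
def bsize : BTree → ℕ
  | .triv => 1
  | .node l r => bsize l + bsize r + 1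

lemma bsize_pos (T : BTree) : 1 ≤ bsize T := by
  cases T <;> simp [bsize]

lemma step_size {S S' : Multiset BTree} (h : StealStep S S') :
    (S'.map bsize).sum < (S.map bsize).sum := by
  obtain ⟨U, l, r, S₀, rfl, rfl⟩ := h
  simp only [Multiset.map_cons, Multiset.sum_cons]
  have h1 := bsize_pos U
  have h2 : bsize (BTree.node l r) = bsize l + bsize r + 1 := rfl
  omega

lemma seq_bound : ∀ (m : ℕ) (S : Multiset BTree), StealSeq m S → m ≤ (S.map bsize).sum := by
  intro m
  induction m with
  | zero => intro S _; exact Nat.zero_le _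
  | succ m ih =>
    rintro S ⟨S', hstep, hseq⟩
    have := ih S' hseq
    have := step_size hstep
    omega

lemma seq_bdd (S : Multiset BTree) : BddAbove {n | StealSeq n S} :=
  ⟨(S.map bsize).sum, fun m hm => seq_bound m S hm⟩

/-- steps with explicit end state -/
def Steps : ℕ → Multiset BTree → Multiset BTree → Prop
  | 0, S, E => E = S
  | n + 1, S, E => ∃ S', StealStep S S' ∧ Steps n S' E

lemma seq_to_steps : ∀ (m : ℕ) (S : Multiset BTree), StealSeq m S → ∃ E, Steps m S E := by
  intro m
  induction m with
  | zero => intro S _; exact ⟨S, rfl⟩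
  | succ m ih =>
    rintro S ⟨S', hstep, hseq⟩
    obtain ⟨E, hE⟩ := ih S' hseq
    exact ⟨E, S', hstep, hE⟩

lemma steps_card : ∀ (m : ℕ) (S E : Multiset BTree), Steps m S E →
    Multiset.card E = Multiset.card S := by
  intro m
  induction m with
  | zero => intro S E hE; rw [show E = S from hE]
  | succ m ih =>
    rintro S E ⟨S', ⟨U, l, r, S₀, rfl, rfl⟩, hsteps⟩
    have := ih _ _ hsteps
    simp at this ⊢
    omega

lemma steps_lift (X : BTree) : ∀ (m : ℕ) (S E : Multiset BTree), Steps m S E →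
    Steps m (X ::ₘ S) (X ::ₘ E) := by
  intro m
  induction m with
  | zero => intro S E hE; rw [show E = S from hE]; rfl
  | succ m ih =>
    rintro S E ⟨S', ⟨U, l, r, S₀, rfl, rfl⟩, hsteps⟩
    refine ⟨X ::ₘ (l ::ₘ r ::ₘ S₀), ⟨U, l, r, X ::ₘ S₀, ?_, ?_⟩, ih _ _ hsteps⟩
    · rw [Multiset.cons_swap X U, Multiset.cons_swap X (BTree.node l r)]
    · rw [Multiset.cons_swap X l, Multiset.cons_swap X r]
  
lemma steps_concat : ∀ (m k : ℕ) (S E : Multiset BTree), Steps m S E → StealSeq k E →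
    StealSeq (m + k) S := by
  intro m
  induction m with
  | zero => intro k S E hE hseq; rw [show E = S from hE] at hseq; simpa using hseq
  | succ m ih =>
    rintro k S E ⟨S', hstep, hsteps⟩ hseq
    rw [show m + 1 + k = (m + k) + 1 by omega]
    exact ⟨S', hstep, ih k S' E hsteps hseq⟩

/-- domination -/
def Dom (t u : BTree) : Prop := u = BTree.triv ∨ u = t

lemma dom_mono : ∀ (m : ℕ) (S S' : Multiset BTree), Multiset.Rel Dom S S' →
    StealSeq m S' → StealSeq m S := by
  intro m
  induction m with
  | zero => intro _ _ _ _; trivial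
  | succ m ih =>
    rintro S S' hrel ⟨T', ⟨U', l, r, S₀', rfl, rfl⟩, hseq⟩
    rw [Multiset.rel_cons_right] at hrel
    obtain ⟨u, S₁, hu, hrel1, rfl⟩ := hrel
    rw [Multiset.rel_cons_right] at hrel1
    obtain ⟨s, S₀, hs, hrel0, rfl⟩ := hrel1
    have hsn : s = BTree.node l r := by
      rcases hs with h | h
      · exact absurd h (by simp)
      · exact h.symm
    subst hsn
    refine ⟨l ::ₘ r ::ₘ S₀, ⟨u, l, r, S₀, rfl, rfl⟩, ?_⟩
    exact ih _ _ (Multiset.Rel.cons (Or.inr rfl) (Multiset.Rel.cons (Or.inr rfl) hrel0)) hseq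

lemma rel_dom_replicate (E : Multiset BTree) :
    Multiset.Rel Dom E (Multiset.replicate (Multiset.card E) BTree.triv) := by
  induction E using Multiset.induction with
  | empty => simp
  | cons x E ih =>
    rw [Multiset.card_cons, Multiset.replicate_succ]
    exact Multiset.Rel.cons (Or.inl rfl) ih

/-- lower bound -/
lemma lb : ∀ (h n : ℕ), StealSeq (phi h n) (CBT h ::ₘ Multiset.replicate n BTree.triv) := by
  intro h
  induction h with
  | zero => intro n; rw [phi_zero_left]; trivial
  | succ h ih =>
    intro n
    cases n with
    | zero => rw [phi_zero_right]; trivial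
    | succ n =>
      obtain ⟨E, hE⟩ := seq_to_steps _ _ (ih n)
      have hcard : Multiset.card E = n + 1 := by
        rw [steps_card _ _ _ hE]; simp
      have tail : StealSeq (phi h (n + 1)) (CBT h ::ₘ E) := by
        apply dom_mono _ _ (CBT h ::ₘ Multiset.replicate (n + 1) BTree.triv) _ (ih (n + 1))
        exact Multiset.Rel.cons (Or.inr rfl) (hcard ▸ rel_dom_replicate E)
      have mid := steps_concat _ _ _ _ (steps_lift (CBT h) _ _ _ hE) tail
      rw [phi_succ_succ, show phi h (n+1) + phi h n + 1 = (phi h n + phi h (n+1)) + 1 by omega]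
      refine ⟨CBT h ::ₘ CBT h ::ₘ Multiset.replicate n BTree.triv,
        ⟨BTree.triv, CBT h, CBT h, Multiset.replicate n BTree.triv, ?_, rfl⟩, mid⟩
      rw [Multiset.replicate_succ, Multiset.cons_swap]
      rfl

lemma seq_le_pot : ∀ (m : ℕ) (H : Multiset ℕ), StealSeq m (H.map CBT) → m ≤ pot H := by
  intro m
  induction m with
  | zero => intro H _; exact Nat.zero_le _
  | succ m ih =>
    rintro H ⟨S', hstep, hseq⟩
    obtain ⟨a, b, M, rfl, rfl⟩ := bridge H S' hstep
    have h1 := ih (b ::ₘ b ::ₘ M) hseq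
    have h2 := pot_step a b M
    omega

theorem potential_CBT (h n : ℕ) :
    Phi (CBT h) n = ∑ i ∈ Finset.Icc 1 n, Nat.choose h i := by
  show sSup {m | StealSeq m (CBT h ::ₘ Multiset.replicate n BTree.triv)} = phi h n
  have hmap : CBT h ::ₘ Multiset.replicate n BTree.triv
      = (h ::ₘ Multiset.replicate n 0).map CBT := by
    rw [Multiset.map_cons, Multiset.map_replicate]; rfl
  apply le_antisymm
  · apply csSup_le
    · exact ⟨0, trivial⟩
    intro m hm
    have hm' : StealSeq m ((h ::ₘ Multiset.replicate n 0).map CBT) := by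
      rw [← hmap]; exact hm
    exact (seq_le_pot m _ hm').trans (pot_start h n)
  · exact le_csSup (seq_bdd _) (lb h n)
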